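/- arXiv:1906.03550 — 2 statements merged into one kernel-verified Lean document; each statement's English description precedes it below -/
import Mathlib

section
/- Let H be the graph whose vertices are all labeled d-out-regular directed graphs on n vertices (every vertex has out-degree exactly d), with G₁ ~ G₂ iff G₂ is obtained from G₁ by changing the out-neighborhood of exactly one vertex, equipped with the uniform lazy walk m_G(G') = 1/(n(C(n-1,d)-1)+1) on closed neighborhoods. Then the uniform distribution ν(G) = C(n-1,d)^{-n} is invariant, and the Ricci curvature satisfies κ(G₁, G₂) ≥ 1/n for all G₁, G₂. -/
open scoped Classical

open Finset

/-- A probability vector on a finite set. -/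
def IsProbVec {V : Type*} [Fintype V] (m : V → ℝ) : Prop :=
  (∀ x, 0 ≤ m x) ∧ ∑ x, m x = 1

/-- A coupling between two probability vectors. -/
def IsCoupling {V : Type*} [Fintype V] (m₁ m₂ : V → ℝ) (A : V → V → ℝ) : Prop :=
  (∀ x y, 0 ≤ A x y) ∧ (∀ x, ∑ y, A x y = m₁ x) ∧ (∀ y, ∑ x, A x y = m₂ y)

/-- The L¹-Wasserstein (transportation) distance between two probability vectors,
with respect to the graph metric. -/
noncomputable def Wdist {V : Type*} [Fintype V] (G : SimpleGraph V) (m₁ m₂ : V → ℝ) : ℝ :=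
  sInf {s | ∃ A : V → V → ℝ, IsCoupling m₁ m₂ A ∧
    s = ∑ x, ∑ y, A x y * (G.dist x y : ℝ)}

/-- A random walk on a graph: at each vertex a probability measure supported on
the closed neighborhood. -/
def IsRandomWalk {V : Type*} [Fintype V] (G : SimpleGraph V) (m : V → V → ℝ) : Prop :=
  ∀ x, IsProbVec (m x) ∧ ∀ y, m x y ≠ 0 → y = x ∨ G.Adj x y

/-- Ollivier's Ricci curvature `κ(x,y) = 1 - W(m_x, m_y)/d(x,y)`. -/
noncomputable def ricci {V : Type*} [Fintype V] (G : SimpleGraph V) (m : V → V → ℝ)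
    (x y : V) : ℝ :=
  1 - Wdist G (m x) (m y) / (G.dist x y : ℝ)

/-- The averaging operator `(Mf)(x) = ∑_y f(y)·m_x(y)`. -/
def Mop {V : Type*} [Fintype V] (m : V → V → ℝ) (f : V → ℝ) : V → ℝ :=
  fun x => ∑ y, f y * m x y

/-- `d`-out-regular directed graphs on `n` vertices: each vertex is assigned a
`d`-element set of out-neighbors among the other vertices. -/
def OutReg (n d : ℕ) := {F : Fin n → Finset (Fin n) // ∀ v, v ∉ F v ∧ (F v).card = d}

instance (n d : ℕ) : Fintype (OutReg n d) := by unfold OutReg; infer_instance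
instance (n d : ℕ) : DecidableEq (OutReg n d) := by unfold OutReg; infer_instance

/-- Two `d`-out-regular graphs are adjacent iff one is obtained from the other by
changing the out-neighborhood of exactly one vertex. -/
def outRegGraph (n d : ℕ) : SimpleGraph (OutReg n d) where
  Adj F₁ F₂ := F₁ ≠ F₂ ∧ ∃ v : Fin n, ∀ u : Fin n, u ≠ v → F₁.val u = F₂.val u
  symm := ⟨fun _ _ h => ⟨h.1.symm, h.2.imp fun _ hv u hu => (hv u hu).symm⟩⟩
  loopless := ⟨fun F h => h.1 rfl⟩

/-- The lazy uniform walk on `d`-out-regular graphs, uniform on closed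
neighborhoods with mass `1/(n(C(n-1,d)-1)+1)`. -/
noncomputable def outRegWalk (n d : ℕ) : OutReg n d → OutReg n d → ℝ :=
  fun F F' =>
    if F = F' ∨ (outRegGraph n d).Adj F F' then
      1 / ((n * ((n - 1).choose d - 1) : ℕ) + 1 : ℝ)
    else 0

namespace ORStuff

variable {n d : ℕ}

/-- Hamming distance between two out-regular graphs. -/
noncomputable def ham (F₁ F₂ : OutReg n d) : ℕ :=
  (univ.filter fun v => F₁.val v ≠ F₂.val v).card

lemma ham_comm (F₁ F₂ : OutReg n d) : ham F₁ F₂ = ham F₂ F₁ := by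
  unfold ham; congr 1; apply filter_congr; intro v _; simp [ne_comm]

@[simp] lemma ham_self (F : OutReg n d) : ham F F = 0 := by
  simp [ham]

lemma ham_eq_zero_iff {F₁ F₂ : OutReg n d} : ham F₁ F₂ = 0 ↔ F₁ = F₂ := by
  constructor
  · intro h
    rw [ham, card_eq_zero, filter_eq_empty_iff] at h
    exact Subtype.ext (funext fun v => not_not.mp (h (mem_univ v)))
  · rintro rfl; simp

lemma ham_triangle (F₁ F₂ F₃ : OutReg n d) : ham F₁ F₃ ≤ ham F₁ F₂ + ham F₂ F₃ := by
  have hsub : (univ.filter fun v => F₁.val v ≠ F₃.val v) ⊆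
      (univ.filter fun v => F₁.val v ≠ F₂.val v) ∪ (univ.filter fun v => F₂.val v ≠ F₃.val v) := by
    intro v hv
    simp only [mem_filter, mem_univ, true_and, mem_union] at hv ⊢
    by_contra hc
    push_neg at hc
    exact hv (hc.1.trans hc.2)
  exact (card_le_card hsub).trans (card_union_le _ _)

lemma adj_iff_ham {F₁ F₂ : OutReg n d} : (outRegGraph n d).Adj F₁ F₂ ↔ ham F₁ F₂ = 1 := by
  constructor
  · rintro ⟨hne, v, hv⟩
    have hsub : (univ.filter fun u => F₁.val u ≠ F₂.val u) ⊆ {v} := by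
      intro u hu
      simp only [mem_filter, mem_univ, true_and] at hu
      simp only [mem_singleton]
      by_contra huv
      exact hu (hv u huv)
    have hne' : (univ.filter fun u => F₁.val u ≠ F₂.val u).Nonempty := by
      rw [filter_nonempty_iff]
      by_contra hc
      push_neg at hc
      exact hne (Subtype.ext (funext fun u => hc u (mem_univ u)))
    have h1 : 1 ≤ ham F₁ F₂ := card_pos.mpr hne'
    have h2 : ham F₁ F₂ ≤ 1 := by
      simpa [ham] using card_le_card hsub
    omega
  · intro h
    obtain ⟨v, hv⟩ := card_eq_one.mp h
    refine ⟨?_, v, ?_⟩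
    · intro hc
      subst hc
      simp [ham] at h
    · intro u hu
      by_contra hc
      have : u ∈ (univ.filter fun u => F₁.val u ≠ F₂.val u) := by simp [hc]
      rw [hv, mem_singleton] at this
      exact hu this

lemma walkCond_iff {F₁ F₂ : OutReg n d} :
    (F₁ = F₂ ∨ (outRegGraph n d).Adj F₁ F₂) ↔ ham F₁ F₂ ≤ 1 := by
  rw [adj_iff_ham, ← ham_eq_zero_iff]
  omega

/-- number of valid out-neighborhoods at `v` -/
noncomputable def VS (n d : ℕ) (v : Fin n) : Finset (Finset (Fin n)) :=
  univ.filter fun s => v ∉ s ∧ s.card = d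

lemma card_VS (v : Fin n) : (VS n d v).card = (n - 1).choose d := by
  have : VS n d v = Finset.powersetCard d (univ.erase v) := by
    ext s
    simp only [VS, mem_filter, mem_univ, true_and, mem_powersetCard]
    constructor
    · rintro ⟨hv, hc⟩
      exact ⟨fun x hx => mem_erase.mpr ⟨fun h => hv (h ▸ hx), mem_univ x⟩, hc⟩
    · rintro ⟨hsub, hc⟩
      exact ⟨fun hv => (mem_erase.mp (hsub hv)).1 rfl, hc⟩
  rw [this, card_powersetCard, card_erase_of_mem (mem_univ v), card_univ, Fintype.card_fin]

lemma mem_VS {v : Fin n} {s : Finset (Fin n)} : s ∈ VS n d v ↔ v ∉ s ∧ s.card = d := by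
  simp [VS]

/-- update the out-neighborhood at one vertex (no-op on invalid input) -/
noncomputable def upd (F : OutReg n d) (v : Fin n) (s : Finset (Fin n)) : OutReg n d :=
  if h : v ∉ s ∧ s.card = d then
    ⟨Function.update F.val v s, fun u => by
      rcases eq_or_ne u v with rfl | hu
      · simpa using h
      · simpa [Function.update_of_ne hu] using F.prop u⟩
  else F

lemma upd_val {F : OutReg n d} {v : Fin n} {s : Finset (Fin n)} (h : s ∈ VS n d v) :
    (upd F v s).val = Function.update F.val v s := by
  rw [mem_VS] at h
  have e := (dif_pos h : upd F v s = _)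
  exact (congrArg (fun x : OutReg n d => x.val) e).trans rfl

lemma upd_val_self {F : OutReg n d} {v : Fin n} {s : Finset (Fin n)} (h : s ∈ VS n d v) :
    (upd F v s).val v = s := by
  rw [upd_val h, Function.update_self]

lemma upd_val_ne {F : OutReg n d} {v u : Fin n} {s : Finset (Fin n)} (h : s ∈ VS n d v)
    (hu : u ≠ v) : (upd F v s).val u = F.val u := by
  rw [upd_val h, Function.update_of_ne hu]

lemma val_mem_VS (F : OutReg n d) (v : Fin n) : F.val v ∈ VS n d v := by
  rw [mem_VS]; exact F.prop v

lemma upd_self (F : OutReg n d) (v : Fin n) : upd F v (F.val v) = F := by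
  apply Subtype.ext
  rw [upd_val (val_mem_VS F v), Function.update_eq_self]

end ORStuff

namespace ORStuff

variable {n d : ℕ}

/-- The closed neighborhood of `F` has exactly `n*(C-1)+1` elements. -/
noncomputable def bucket (F : OutReg n d) (v : Fin n) : Finset (OutReg n d) :=
  ((VS n d v).erase (F.val v)).image (upd F v)

lemma mem_bucket {F : OutReg n d} {v : Fin n} {G : OutReg n d} : G ∈ bucket F v ↔
    (G.val v ≠ F.val v ∧ ∀ u, u ≠ v → G.val u = F.val u) := by
  unfold bucket
  simp only [mem_image, mem_erase]
  constructor
  · rintro ⟨s, ⟨hs1, hs2⟩, rfl⟩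
    refine ⟨by rw [upd_val_self hs2]; exact hs1, fun u hu => upd_val_ne hs2 hu⟩
  · rintro ⟨h1, h2⟩
    refine ⟨G.val v, ⟨h1, by rw [mem_VS]; exact G.prop v⟩, ?_⟩
    apply Subtype.ext
    rw [upd_val (by rw [mem_VS]; exact G.prop v)]
    funext u
    rcases eq_or_ne u v with rfl | hu
    · rw [Function.update_self]
    · rw [Function.update_of_ne hu, h2 u hu]

/-- The closed neighborhood of `F` has exactly `n*(C-1)+1` elements. -/
lemma card_nbhd (F : OutReg n d) :
    (univ.filter fun F' => ham F F' ≤ 1).card = n * ((n - 1).choose d - 1) + 1 := by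
  have hdecomp : (univ.filter fun F' => ham F F' ≤ 1) =
      insert F (univ.biUnion (bucket F)) := by
    ext G
    simp only [mem_filter, mem_univ, true_and, mem_insert, mem_biUnion]
    rw [← walkCond_iff]
    constructor
    · rintro (rfl | hadj)
      · left; rfl
      · obtain ⟨hne, v, hv⟩ := hadj
        right
        refine ⟨v, mem_bucket.mpr ⟨?_, fun u hu => (hv u hu).symm⟩⟩
        intro hc
        exact hne (Subtype.ext (funext fun u => by
          rcases eq_or_ne u v with rfl | hu
          · exact hc.symm
          · exact hv u hu))
    · rintro (rfl | ⟨v, hG⟩)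
      · left; rfl
      · rw [mem_bucket] at hG
        right
        refine ⟨fun hc => hG.1 (by rw [← hc]), v, fun u hu => (hG.2 u hu).symm⟩
  rw [hdecomp]
  have hFnot : F ∉ univ.biUnion (bucket F) := by
    simp only [mem_biUnion, mem_univ, true_and, not_exists]
    rintro v hG
    rw [mem_bucket] at hG
    exact hG.1 rfl
  rw [card_insert_of_notMem hFnot, card_biUnion]
  · have hcb : ∀ v : Fin n, (bucket F v).card = (n - 1).choose d - 1 := by
      intro v
      unfold bucket
      rw [card_image_of_injOn, card_erase_of_mem (val_mem_VS F v), card_VS]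
      intro s hs t ht hst
      have := congrArg (fun G : OutReg n d => G.val v) hst
      simpa [upd_val_self (mem_erase.mp hs).2, upd_val_self (mem_erase.mp ht).2] using this
    rw [Finset.sum_congr rfl fun v _ => hcb v, sum_const, card_univ, Fintype.card_fin,
      smul_eq_mul, add_comm]
  · intro v _ w _ hvw
    rw [Function.onFun, Finset.disjoint_left]
    intro G hGv hGw
    rw [mem_bucket] at hGv hGw
    exact hGv.1 (hGw.2 v hvw ▸ rfl)

lemma Npos : (0:ℝ) < ((n * ((n - 1).choose d - 1) : ℕ) + 1 : ℝ) := by positivity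

lemma walk_eq (F F' : OutReg n d) :
    outRegWalk n d F F' =
      if ham F F' ≤ 1 then 1 / ((n * ((n - 1).choose d - 1) : ℕ) + 1 : ℝ) else 0 := by
  rw [outRegWalk]
  exact if_congr walkCond_iff rfl rfl

lemma walk_nonneg (F F' : OutReg n d) : 0 ≤ outRegWalk n d F F' := by
  rw [walk_eq]
  split
  · positivity
  · exact le_refl 0
end ORStuff

namespace ORStuff

variable {n d : ℕ}

lemma sum_walk (F : OutReg n d) : ∑ F' : OutReg n d, outRegWalk n d F F' = 1 := by
  rw [Finset.sum_congr rfl fun F' _ => walk_eq F F', Finset.sum_ite, Finset.sum_const_zero,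
    add_zero, Finset.sum_const, card_nbhd F, nsmul_eq_mul]
  have h0 : ((n * ((n - 1).choose d - 1) : ℕ) + 1 : ℝ) ≠ 0 := ne_of_gt Npos
  push_cast
  field_simp

lemma walk_symm (F F' : OutReg n d) : outRegWalk n d F F' = outRegWalk n d F' F := by
  rw [walk_eq, walk_eq, ham_comm]

/-- one step towards `F₂` -/
lemma step_decomp {F₁ F₂ : OutReg n d} {v : Fin n}
    (hv : v ∈ univ.filter fun u => F₁.val u ≠ F₂.val u) :
    (outRegGraph n d).Adj F₁ (upd F₁ v (F₂.val v)) ∧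
      ham (upd F₁ v (F₂.val v)) F₂ = ham F₁ F₂ - 1 := by
  have hv' : F₁.val v ≠ F₂.val v := (mem_filter.mp hv).2
  have hmem : F₂.val v ∈ VS n d v := val_mem_VS F₂ v
  constructor
  · rw [adj_iff_ham]
    have he : (univ.filter fun u => F₁.val u ≠ (upd F₁ v (F₂.val v)).val u) = {v} := by
      ext u
      simp only [mem_filter, mem_univ, true_and, mem_singleton]
      rcases eq_or_ne u v with rfl | hu
      · simp [upd_val_self hmem, hv']
      · simp [upd_val_ne hmem hu, hu]
    rw [ham, he, card_singleton]
  · have he : (univ.filter fun u => (upd F₁ v (F₂.val v)).val u ≠ F₂.val u)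
        = (univ.filter fun u => F₁.val u ≠ F₂.val u).erase v := by
      ext u
      simp only [mem_filter, mem_univ, true_and, mem_erase]
      rcases eq_or_ne u v with rfl | hu
      · simp [upd_val_self hmem]
      · simp [upd_val_ne hmem hu, hu]
    rw [ham, he, card_erase_of_mem hv]
    rfl

lemma exists_walk_ham : ∀ (k : ℕ) (F₁ F₂ : OutReg n d), ham F₁ F₂ = k →
    ∃ p : (outRegGraph n d).Walk F₁ F₂, p.length = k := by
  intro k
  induction k with
  | zero =>
    intro F₁ F₂ h
    obtain rfl := ham_eq_zero_iff.mp h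
    exact ⟨SimpleGraph.Walk.nil, rfl⟩
  | succ k ih =>
    intro F₁ F₂ h
    obtain ⟨v, hv⟩ : (univ.filter fun u => F₁.val u ≠ F₂.val u).Nonempty :=
      card_pos.mp (by unfold ham at h; omega)
    obtain ⟨hadj, hham⟩ := step_decomp (F₂ := F₂) hv
    rw [h] at hham
    obtain ⟨p, hp⟩ := ih _ F₂ hham
    exact ⟨SimpleGraph.Walk.cons hadj p, by simp [hp]⟩

lemma ham_le_length {F₁ F₂ : OutReg n d} (p : (outRegGraph n d).Walk F₁ F₂) :
    ham F₁ F₂ ≤ p.length := by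
  induction p with
  | nil => simp
  | @cons a b c huv q ih =>
    calc ham a c ≤ ham a b + ham b c := ham_triangle a b c
    _ ≤ 1 + q.length := add_le_add (le_of_eq (adj_iff_ham.mp huv)) ih
    _ = (SimpleGraph.Walk.cons huv q).length := by rw [SimpleGraph.Walk.length_cons]; omega

lemma dist_eq_ham (F₁ F₂ : OutReg n d) : (outRegGraph n d).dist F₁ F₂ = ham F₁ F₂ := by
  obtain ⟨p, hp⟩ := exists_walk_ham (ham F₁ F₂) F₁ F₂ rfl
  apply le_antisymm
  · exact hp ▸ SimpleGraph.dist_le p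
  · obtain ⟨q, hq⟩ := SimpleGraph.Reachable.exists_walk_length_eq_dist ⟨p⟩
    exact hq ▸ ham_le_length q

end ORStuff

namespace ORStuff

lemma glue {V : Type*} [Fintype V] (ρ : V → V → ℝ) (hρ0 : ∀ x y, 0 ≤ ρ x y)
    (hρt : ∀ x y z, ρ x z ≤ ρ x y + ρ y z)
    {μ₁ μ₂ μ₃ : V → ℝ} {A₁ A₂ : V → V → ℝ}
    (h₁ : IsCoupling μ₁ μ₂ A₁) (h₂ : IsCoupling μ₂ μ₃ A₂) :
    ∃ B : V → V → ℝ, IsCoupling μ₁ μ₃ B ∧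
      ∑ x, ∑ z, B x z * ρ x z ≤
        (∑ x, ∑ y, A₁ x y * ρ x y) + (∑ y, ∑ z, A₂ y z * ρ y z) := by
  obtain ⟨h1p, h1r, h1c⟩ := h₁
  obtain ⟨h2p, h2r, h2c⟩ := h₂
  have hμ2 : ∀ y, 0 ≤ μ₂ y := fun y => (h1c y) ▸ Finset.sum_nonneg fun x _ => h1p x y
  have hA1z : ∀ x y, μ₂ y = 0 → A₁ x y = 0 := by
    intro x y hy
    have hle : A₁ x y ≤ μ₂ y := by
      rw [← h1c y]
      exact Finset.single_le_sum (fun i _ => h1p i y) (mem_univ x)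
    exact le_antisymm (hy ▸ hle) (h1p x y)
  have hA2z : ∀ y z, μ₂ y = 0 → A₂ y z = 0 := by
    intro y z hy
    have hle : A₂ y z ≤ μ₂ y := by
      rw [← h2r y]
      exact Finset.single_le_sum (fun i _ => h2p y i) (mem_univ z)
    exact le_antisymm (hy ▸ hle) (h2p y z)
  have I1 : ∀ x y, ∑ z, A₁ x y * A₂ y z / μ₂ y = A₁ x y := by
    intro x y
    rcases eq_or_ne (μ₂ y) 0 with hy | hy
    · simp [hA1z x y hy]
    · rw [← Finset.sum_div, ← Finset.mul_sum, h2r y, mul_div_assoc, div_self hy, mul_one]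
  have I2 : ∀ y z, ∑ x, A₁ x y * A₂ y z / μ₂ y = A₂ y z := by
    intro y z
    rcases eq_or_ne (μ₂ y) 0 with hy | hy
    · simp [hA2z y z hy]
    · rw [← Finset.sum_div, ← Finset.sum_mul, h1c y, mul_comm,
        mul_div_assoc, div_self hy, mul_one]
  refine ⟨fun x z => ∑ y, A₁ x y * A₂ y z / μ₂ y, ⟨?_, ?_, ?_⟩, ?_⟩
  · intro x z
    exact Finset.sum_nonneg fun y _ =>
      div_nonneg (mul_nonneg (h1p x y) (h2p y z)) (hμ2 y)
  · intro x
    rw [Finset.sum_comm]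
    rw [Finset.sum_congr rfl fun y _ => I1 x y]
    exact h1r x
  · intro z
    rw [Finset.sum_comm]
    rw [Finset.sum_congr rfl fun y _ => I2 y z]
    exact h2c z
  · have step1 : ∑ x, ∑ z, (∑ y, A₁ x y * A₂ y z / μ₂ y) * ρ x z ≤
        ∑ x, ∑ z, ∑ y, (A₁ x y * A₂ y z / μ₂ y) * (ρ x y + ρ y z) := by
      apply Finset.sum_le_sum; intro x _
      apply Finset.sum_le_sum; intro z _
      rw [Finset.sum_mul]
      apply Finset.sum_le_sum; intro y _
      exact mul_le_mul_of_nonneg_left (hρt x y z)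
        (div_nonneg (mul_nonneg (h1p x y) (h2p y z)) (hμ2 y))
    have e1 : ∀ x y, ∑ z, (A₁ x y * A₂ y z / μ₂ y) * ρ x y = A₁ x y * ρ x y := by
      intro x y; rw [← Finset.sum_mul, I1]
    have e2 : ∀ y z, ∑ x, (A₁ x y * A₂ y z / μ₂ y) * ρ y z = A₂ y z * ρ y z := by
      intro y z; rw [← Finset.sum_mul, I2]
    have step2 : ∑ x, ∑ z, ∑ y, (A₁ x y * A₂ y z / μ₂ y) * (ρ x y + ρ y z)
        = (∑ x, ∑ y, A₁ x y * ρ x y) + (∑ y, ∑ z, A₂ y z * ρ y z) := by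
      have hsplit : ∀ (x z : V), ∑ y, (A₁ x y * A₂ y z / μ₂ y) * (ρ x y + ρ y z)
          = (∑ y, (A₁ x y * A₂ y z / μ₂ y) * ρ x y)
            + (∑ y, (A₁ x y * A₂ y z / μ₂ y) * ρ y z) := by
        intro x z
        rw [← Finset.sum_add_distrib]
        exact Finset.sum_congr rfl fun y _ => mul_add _ _ _
      calc ∑ x, ∑ z, ∑ y, (A₁ x y * A₂ y z / μ₂ y) * (ρ x y + ρ y z)
          = ∑ x, ((∑ z, ∑ y, (A₁ x y * A₂ y z / μ₂ y) * ρ x y)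
            + (∑ z, ∑ y, (A₁ x y * A₂ y z / μ₂ y) * ρ y z)) := by
            apply Finset.sum_congr rfl; intro x _
            rw [← Finset.sum_add_distrib]
            exact Finset.sum_congr rfl fun z _ => hsplit x z
        _ = (∑ x, ∑ z, ∑ y, (A₁ x y * A₂ y z / μ₂ y) * ρ x y)
            + (∑ x, ∑ z, ∑ y, (A₁ x y * A₂ y z / μ₂ y) * ρ y z) :=
            Finset.sum_add_distrib
        _ = (∑ x, ∑ y, A₁ x y * ρ x y) + (∑ y, ∑ z, A₂ y z * ρ y z) := by
            congr 1
            · apply Finset.sum_congr rfl; intro x _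
              rw [Finset.sum_comm]
              exact Finset.sum_congr rfl fun y _ => e1 x y
            · rw [Finset.sum_comm]
              rw [Finset.sum_congr rfl fun z _ => Finset.sum_comm]
              rw [Finset.sum_congr rfl fun z _ =>
                Finset.sum_congr rfl fun y _ => e2 y z]
              exact Finset.sum_comm
    exact step1.trans (le_of_eq step2)

end ORStuff

namespace ORStuff

variable {n d : ℕ}

set_option maxHeartbeats 2000000 in
lemma edge_coupling {F₁ F₂ : OutReg n d} (h : (outRegGraph n d).Adj F₁ F₂) :
    ∃ A : OutReg n d → OutReg n d → ℝ,
      IsCoupling (outRegWalk n d F₁) (outRegWalk n d F₂) A ∧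
      ∑ x, ∑ y, A x y * (ham x y : ℝ) ≤
        1 - ((n - 1).choose d : ℝ) / ((n * ((n - 1).choose d - 1) : ℕ) + 1 : ℝ) := by
  -- the differing vertex
  have hh : ham F₁ F₂ = 1 := adj_iff_ham.mp h
  obtain ⟨v, hvs⟩ := card_eq_one.mp hh
  have hv : F₁.val v ≠ F₂.val v := by
    have : v ∈ univ.filter fun u => F₁.val u ≠ F₂.val u := hvs ▸ mem_singleton_self v
    exact (mem_filter.mp this).2
  have hoff : ∀ u, u ≠ v → F₁.val u = F₂.val u := by
    intro u hu
    by_contra hc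
    have : u ∈ ({v} : Finset (Fin n)) := hvs ▸ mem_filter.mpr ⟨mem_univ u, hc⟩
    exact hu (mem_singleton.mp this)
  set σ : Equiv.Perm (Finset (Fin n)) := Equiv.swap (F₁.val v) (F₂.val v) with hσ
  have hσVS : ∀ s, s ∈ VS n d v → σ s ∈ VS n d v := by
    intro s hs
    rcases eq_or_ne s (F₁.val v) with rfl | h1
    · rw [hσ, Equiv.swap_apply_left]; exact val_mem_VS F₂ v
    rcases eq_or_ne s (F₂.val v) with rfl | h2
    · rw [hσ, Equiv.swap_apply_right]; exact val_mem_VS F₁ v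
    · rw [hσ, Equiv.swap_apply_of_ne_of_ne h1 h2]; exact hs
  set τ : OutReg n d → OutReg n d := fun G => upd G v (σ (G.val v)) with hτ
  have hτv : ∀ G : OutReg n d, (τ G).val v = σ (G.val v) :=
    fun G => upd_val_self (hσVS _ (val_mem_VS G v))
  have hτu : ∀ (G : OutReg n d) (u : Fin n), u ≠ v → (τ G).val u = G.val u :=
    fun G u hu => upd_val_ne (hσVS _ (val_mem_VS G v)) hu
  have hτi : Function.Involutive τ := by
    intro G
    apply Subtype.ext
    have h2 : (τ (τ G)).val = Function.update (τ G).val v (G.val v) := by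
      show (upd (τ G) v (σ ((τ G).val v))).val = _
      rw [hτv G, Equiv.swap_apply_self]
      exact upd_val (val_mem_VS G v)
    rw [h2]
    funext u
    rcases eq_or_ne u v with rfl | hu
    · rw [Function.update_self]
    · rw [Function.update_of_ne hu, hτu G u hu]
  set T : Equiv.Perm (OutReg n d) :=
    (Equiv.swap F₁ F₂).trans (Function.Involutive.toPerm τ hτi) with hT
  have hTapp : ∀ G, T G = τ (Equiv.swap F₁ F₂ G) := fun G => rfl
  -- mass preservation
  have hham_tau : ∀ G, ham F₂ (τ G) = ham F₁ G := by
    intro G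
    unfold ham
    congr 1
    apply filter_congr
    intro u _
    rcases eq_or_ne u v with hu | hu
    · have h2 : F₂.val v = σ (F₁.val v) := (Equiv.swap_apply_left _ _).symm
      simp only [hu, hτv G, h2, ne_eq, Equiv.apply_eq_iff_eq]
    · simp only [hτu G u hu, hoff u hu]
  have hm_tau : ∀ G, outRegWalk n d F₂ (τ G) = outRegWalk n d F₁ G := by
    intro G; rw [walk_eq, walk_eq, hham_tau]
  have hle1 : ham F₁ F₂ ≤ 1 := le_of_eq hh
  have hm_swap : ∀ G, outRegWalk n d F₁ (Equiv.swap F₁ F₂ G) = outRegWalk n d F₁ G := by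
    intro G
    rcases eq_or_ne G F₁ with rfl | h1
    · rw [Equiv.swap_apply_left, walk_eq, walk_eq, if_pos hle1, if_pos (by simp)]
    rcases eq_or_ne G F₂ with rfl | h2
    · rw [Equiv.swap_apply_right, walk_eq, walk_eq, if_pos (by simp), if_pos hle1]
    · rw [Equiv.swap_apply_of_ne_of_ne h1 h2]
  have hmT : ∀ G, outRegWalk n d F₂ (T G) = outRegWalk n d F₁ G := by
    intro G; rw [hTapp, hm_tau, hm_swap]
  -- the special set Z
  set Z : Finset (OutReg n d) := (VS n d v).image (upd F₁ v) with hZ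
  have hupd2 : upd F₁ v (F₂.val v) = F₂ := by
    apply Subtype.ext
    rw [upd_val (val_mem_VS F₂ v)]
    funext u
    rcases eq_or_ne u v with rfl | hu
    · rw [Function.update_self]
    · rw [Function.update_of_ne hu]; exact hoff u hu
  have hF1Z : F₁ ∈ Z := mem_image.mpr ⟨F₁.val v, val_mem_VS F₁ v, upd_self F₁ v⟩
  have hF2Z : F₂ ∈ Z := mem_image.mpr ⟨F₂.val v, val_mem_VS F₂ v, hupd2⟩
  have hTF1 : T F₁ = F₁ := by
    rw [hTapp, Equiv.swap_apply_left]
    apply Subtype.ext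
    have : (τ F₂).val = Function.update F₂.val v (σ (F₂.val v)) :=
      upd_val (hσVS _ (val_mem_VS F₂ v))
    rw [this, hσ, Equiv.swap_apply_right]
    funext u
    rcases eq_or_ne u v with rfl | hu
    · rw [Function.update_self]
    · rw [Function.update_of_ne hu]; exact (hoff u hu).symm
  have hTF2 : T F₂ = F₂ := by
    rw [hTapp, Equiv.swap_apply_right]
    show τ F₁ = F₂
    rw [hτ]
    show upd F₁ v (σ (F₁.val v)) = F₂
    rw [hσ, Equiv.swap_apply_left]
    exact hupd2
  have hZfix : ∀ G ∈ Z, T G = G := by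
    intro G hG
    obtain ⟨s, hs, rfl⟩ := mem_image.mp hG
    rcases eq_or_ne s (F₁.val v) with rfl | hs1
    · rw [upd_self]; exact hTF1
    rcases eq_or_ne s (F₂.val v) with rfl | hs2
    · rw [hupd2]; exact hTF2
    · have hGne1 : upd F₁ v s ≠ F₁ := fun hc => hs1 (by rw [← upd_val_self hs, hc])
      have hGne2 : upd F₁ v s ≠ F₂ := fun hc => hs2 (by rw [← upd_val_self hs, hc])
      rw [hTapp, Equiv.swap_apply_of_ne_of_ne hGne1 hGne2]
      show upd (upd F₁ v s) v (σ ((upd F₁ v s).val v)) = upd F₁ v s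
      rw [upd_val_self hs, hσ, Equiv.swap_apply_of_ne_of_ne hs1 hs2]
      apply Subtype.ext
      rw [upd_val hs, upd_val hs, Function.update_idem]
  have hZmem : ∀ G ∈ Z, ham F₁ G ≤ 1 := by
    intro G hG
    obtain ⟨s, hs, rfl⟩ := mem_image.mp hG
    have hsub : (univ.filter fun u => F₁.val u ≠ (upd F₁ v s).val u) ⊆ {v} := by
      intro u hu
      simp only [mem_filter, mem_univ, true_and] at hu
      rw [mem_singleton]
      by_contra hc
      exact hu (by rw [upd_val_ne hs hc])
    calc ham F₁ (upd F₁ v s) ≤ ({v} : Finset (Fin n)).card := card_le_card hsub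
    _ = 1 := card_singleton v
  have hcardZ : Z.card = (n - 1).choose d := by
    rw [hZ, card_image_of_injOn, card_VS]
    intro s hs t ht hst
    have := congrArg (fun G : OutReg n d => G.val v) hst
    simpa [upd_val_self hs, upd_val_self ht] using this
  have hham1 : ∀ G, ham G (T G) ≤ 1 := by
    intro G
    by_cases hG : G ∈ Z
    · rw [hZfix G hG, ham_self]; omega
    · have h1 : G ≠ F₁ := fun hc => hG (hc ▸ hF1Z)
      have h2 : G ≠ F₂ := fun hc => hG (hc ▸ hF2Z)
      rw [hTapp, Equiv.swap_apply_of_ne_of_ne h1 h2]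
      have hsub : (univ.filter fun u => G.val u ≠ (τ G).val u) ⊆ {v} := by
        intro u hu
        simp only [mem_filter, mem_univ, true_and] at hu
        rw [mem_singleton]
        by_contra hc
        exact hu (hτu G u hc).symm
      calc ham G (τ G) ≤ ({v} : Finset (Fin n)).card := card_le_card hsub
      _ = 1 := card_singleton v
  -- the coupling
  refine ⟨fun x y => if y = T x then outRegWalk n d F₁ x else 0, ⟨?_, ?_, ?_⟩, ?_⟩
  · intro x y
    dsimp only
    split
    · exact walk_nonneg F₁ x
    · exact le_refl 0
  · intro x
    simp [Finset.sum_ite_eq']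
  · intro y
    dsimp only
    rw [Finset.sum_congr rfl fun x _ => by rw [← hmT x]]
    rw [Equiv.sum_comp T (fun z => if y = z then outRegWalk n d F₂ z else 0)]
    simp [Finset.sum_ite_eq]
  · have hcost : ∀ x : OutReg n d,
        ∑ y, (if y = T x then outRegWalk n d F₁ x else 0) * (ham x y : ℝ)
          = outRegWalk n d F₁ x * (ham x (T x) : ℝ) := by
      intro x
      rw [Finset.sum_congr rfl fun y _ => ite_mul _ _ _ _]
      simp [Finset.sum_ite_eq']
    rw [Finset.sum_congr rfl fun x _ => hcost x]
    rw [← Finset.sum_sdiff (subset_univ Z)]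
    rw [show ∑ G ∈ Z, outRegWalk n d F₁ G * (ham G (T G) : ℝ) = 0 from
      Finset.sum_eq_zero fun G hG => by rw [hZfix G hG, ham_self]; simp, add_zero]
    have hZsum : ∑ G ∈ Z, outRegWalk n d F₁ G
        = ((n - 1).choose d : ℝ) / ((n * ((n - 1).choose d - 1) : ℕ) + 1 : ℝ) := by
      rw [Finset.sum_congr rfl fun G hG => by rw [walk_eq, if_pos (hZmem G hG)]]
      rw [Finset.sum_const, hcardZ, nsmul_eq_mul, mul_one_div]
    calc ∑ G ∈ univ \ Z, outRegWalk n d F₁ G * (ham G (T G) : ℝ)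
        ≤ ∑ G ∈ univ \ Z, outRegWalk n d F₁ G := by
          apply Finset.sum_le_sum
          intro G _
          calc outRegWalk n d F₁ G * (ham G (T G) : ℝ)
              ≤ outRegWalk n d F₁ G * 1 := by
                apply mul_le_mul_of_nonneg_left _ (walk_nonneg F₁ G)
                exact_mod_cast hham1 G
          _ = outRegWalk n d F₁ G := mul_one _
      _ = 1 - ((n - 1).choose d : ℝ) / ((n * ((n - 1).choose d - 1) : ℕ) + 1 : ℝ) := by
          rw [Finset.sum_sdiff_eq_sub (subset_univ Z), sum_walk F₁, hZsum]

end ORStuff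

namespace ORStuff

variable {n d : ℕ}

lemma path_coupling : ∀ (k : ℕ) (F₁ F₂ : OutReg n d), ham F₁ F₂ = k →
    ∃ A : OutReg n d → OutReg n d → ℝ,
      IsCoupling (outRegWalk n d F₁) (outRegWalk n d F₂) A ∧
      ∑ x, ∑ y, A x y * (ham x y : ℝ) ≤
        (k : ℝ) * (1 - ((n - 1).choose d : ℝ) /
          ((n * ((n - 1).choose d - 1) : ℕ) + 1 : ℝ)) := by
  intro k
  induction k with
  | zero =>
    intro F₁ F₂ h0
    obtain rfl := ham_eq_zero_iff.mp h0
    refine ⟨fun x y => if y = x then outRegWalk n d F₁ x else 0, ⟨?_, ?_, ?_⟩, ?_⟩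
    · intro x y
      dsimp only
      split
      · exact walk_nonneg F₁ x
      · exact le_refl 0
    · intro x
      simp [Finset.sum_ite_eq']
    · intro y
      simp [Finset.sum_ite_eq']
    · have hz : ∀ x : OutReg n d,
          ∑ y, (if y = x then outRegWalk n d F₁ x else 0) * (ham x y : ℝ) = 0 := by
        intro x
        apply Finset.sum_eq_zero
        intro y _
        rcases eq_or_ne y x with rfl | hxy
        · simp
        · simp [hxy]
      rw [Finset.sum_congr rfl fun x _ => hz x]
      simp
  | succ k ih =>
    intro F₁ F₂ h
    obtain ⟨v, hv⟩ : (univ.filter fun u => F₁.val u ≠ F₂.val u).Nonempty :=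
      card_pos.mp (by unfold ham at h; omega)
    obtain ⟨hadj, hham⟩ := step_decomp (F₂ := F₂) hv
    rw [h] at hham
    obtain ⟨A₁, hA₁, hc₁⟩ := edge_coupling hadj
    obtain ⟨A₂, hA₂, hc₂⟩ := ih _ F₂ hham
    obtain ⟨B, hB, hcB⟩ := glue (fun x y => (ham x y : ℝ)) (fun x y => Nat.cast_nonneg _)
      (fun x y z => by exact_mod_cast ham_triangle x y z) hA₁ hA₂
    refine ⟨B, hB, hcB.trans ?_⟩
    have hc : ((k+1 : ℕ) : ℝ) * (1 - ((n - 1).choose d : ℝ) /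
          ((n * ((n - 1).choose d - 1) : ℕ) + 1 : ℝ))
        = (1 - ((n - 1).choose d : ℝ) / ((n * ((n - 1).choose d - 1) : ℕ) + 1 : ℝ))
          + (k : ℝ) * (1 - ((n - 1).choose d : ℝ) /
            ((n * ((n - 1).choose d - 1) : ℕ) + 1 : ℝ)) := by
      push_cast
      ring
    rw [hc]
    exact add_le_add hc₁ hc₂

lemma Wdist_le (F₁ F₂ : OutReg n d) :
    Wdist (outRegGraph n d) (outRegWalk n d F₁) (outRegWalk n d F₂) ≤
      (ham F₁ F₂ : ℝ) * (1 - ((n - 1).choose d : ℝ) /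
        ((n * ((n - 1).choose d - 1) : ℕ) + 1 : ℝ)) := by
  obtain ⟨A, hA, hc⟩ := path_coupling (ham F₁ F₂) F₁ F₂ rfl
  have hbdd : BddBelow {s | ∃ A : OutReg n d → OutReg n d → ℝ,
      IsCoupling (outRegWalk n d F₁) (outRegWalk n d F₂) A ∧
      s = ∑ x, ∑ y, A x y * (((outRegGraph n d).dist x y : ℕ) : ℝ)} := by
    refine ⟨0, ?_⟩
    rintro s ⟨A', hA', rfl⟩
    exact Finset.sum_nonneg fun x _ => Finset.sum_nonneg fun y _ =>
      mul_nonneg (hA'.1 x y) (Nat.cast_nonneg _)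
  have h1 : Wdist (outRegGraph n d) (outRegWalk n d F₁) (outRegWalk n d F₂) ≤
      ∑ x, ∑ y, A x y * (((outRegGraph n d).dist x y : ℕ) : ℝ) :=
    csInf_le hbdd ⟨A, hA, rfl⟩
  have h2 : ∑ x, ∑ y, A x y * (((outRegGraph n d).dist x y : ℕ) : ℝ)
      = ∑ x, ∑ y, A x y * (ham x y : ℝ) := by
    apply Finset.sum_congr rfl; intro x _
    apply Finset.sum_congr rfl; intro y _
    rw [dist_eq_ham]
  rw [h2] at h1
  exact h1.trans hc

end ORStuff


/-- The uniform distribution `C(n-1,d)^{-n}` is invariant for the lazy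
uniform walk on `d`-out-regular graphs, and the Ricci curvature is at least `1/n` for
all pairs. -/
theorem outReg_invariant_and_ricci (n d : ℕ) :
    (∀ F : OutReg n d,
      ∑ F' : OutReg n d, ((((n - 1).choose d : ℝ)) ^ n)⁻¹ * outRegWalk n d F' F =
        ((((n - 1).choose d : ℝ)) ^ n)⁻¹) ∧
    (∀ F₁ F₂ : OutReg n d,
      (1 : ℝ) / (n : ℝ) ≤ ricci (outRegGraph n d) (outRegWalk n d) F₁ F₂) := by
  constructor
  · intro F
    have hsymm : ∀ F' : OutReg n d,
        ((((n - 1).choose d : ℝ)) ^ n)⁻¹ * outRegWalk n d F' F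
          = ((((n - 1).choose d : ℝ)) ^ n)⁻¹ * outRegWalk n d F F' := fun F' => by
      rw [ORStuff.walk_symm F' F]
    rw [Finset.sum_congr rfl fun F' _ => hsymm F', ← Finset.mul_sum,
      ORStuff.sum_walk F, mul_one]
  · intro F₁ F₂
    rcases eq_or_ne F₁ F₂ with rfl | hne
    · simp only [ricci, SimpleGraph.dist_self, Nat.cast_zero, div_zero, sub_zero]
      rcases Nat.eq_zero_or_pos n with h0 | hp
      · subst h0; norm_num
      · rw [div_le_one (by exact_mod_cast hp)]
        exact_mod_cast hp
    · have hk : ORStuff.ham F₁ F₂ ≠ 0 := fun h0 => hne (ORStuff.ham_eq_zero_iff.mp h0)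
      obtain ⟨v, hv⟩ : (Finset.univ.filter fun u => F₁.val u ≠ F₂.val u).Nonempty :=
        Finset.card_pos.mp (Nat.pos_of_ne_zero hk)
      have hn : 0 < n := by have := v.isLt; omega
      have hC : 0 < (n - 1).choose d :=
        (ORStuff.card_VS v) ▸ Finset.card_pos.mpr ⟨F₁.val v, ORStuff.val_mem_VS F₁ v⟩
      have hNpos : (0:ℝ) < ((n * ((n - 1).choose d - 1) : ℕ) + 1 : ℝ) := ORStuff.Npos
      have hW := ORStuff.Wdist_le F₁ F₂
      have hKpos : (0:ℝ) < ((ORStuff.ham F₁ F₂ : ℕ) : ℝ) := by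
        exact_mod_cast Nat.pos_of_ne_zero hk
      simp only [ricci, ORStuff.dist_eq_ham]
      have hdiv : Wdist (outRegGraph n d) (outRegWalk n d F₁) (outRegWalk n d F₂)
            / ((ORStuff.ham F₁ F₂ : ℕ) : ℝ)
          ≤ 1 - ((n - 1).choose d : ℝ) / ((n * ((n - 1).choose d - 1) : ℕ) + 1 : ℝ) := by
        rw [div_le_iff₀ hKpos]
        exact hW.trans (le_of_eq (mul_comm _ _))
      have hfrac : (1:ℝ)/(n:ℝ) ≤ ((n - 1).choose d : ℝ) /
          ((n * ((n - 1).choose d - 1) : ℕ) + 1 : ℝ) := by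
        rw [div_le_div_iff₀ (by exact_mod_cast hn) hNpos, one_mul]
        have hNat : n * ((n - 1).choose d - 1) + 1 ≤ (n - 1).choose d * n := by
          have h1 : (n - 1).choose d - 1 + 1 = (n - 1).choose d :=
            Nat.succ_pred_eq_of_pos hC
          calc n * ((n - 1).choose d - 1) + 1 ≤ n * ((n - 1).choose d - 1) + n := by omega
          _ = n * ((n - 1).choose d - 1 + 1) := by ring
          _ = n * (n - 1).choose d := by rw [h1]
          _ = (n - 1).choose d * n := Nat.mul_comm _ _
        exact_mod_cast hNat
      linarith
end

section
/- Let H be the graph on all labeled k-uniform hypergraphs on n vertices with exactly M hyperedges, where two hypergraphs are adjacent iff one is obtained from the other by swapping one hyperedge with one non-hyperedge, equipped with the lazy uniform random walk m_ℋ(ℋ') = 1/(M(C(n,k)-M)+1) on closed neighborhoods. Then H is M(C(n,k)-M)-regular, the uniform distribution is invariant, and the Ricci curvature satisfies κ(ℋ₁, ℋ₂) ≥ C(n,k)/(M(C(n,k)-M)+1) for all ℋ₁, ℋ₂. -/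
open Finset

/-- `k`-uniform hypergraphs on `n` vertices with exactly `M` hyperedges. -/
def HypergraphM (n k M : ℕ) :=
  {E : Finset (Finset (Fin n)) // (∀ h ∈ E, h.card = k) ∧ E.card = M}

instance (n k M : ℕ) : Fintype (HypergraphM n k M) := by unfold HypergraphM; infer_instance
instance (n k M : ℕ) : DecidableEq (HypergraphM n k M) := by unfold HypergraphM; infer_instance

/-- The exchange graph on `k`-uniform hypergraphs with `M` hyperedges: adjacency is
swapping one hyperedge with one non-hyperedge. -/
def hypExchangeGraph (n k M : ℕ) : SimpleGraph (HypergraphM n k M) where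
  Adj H₁ H₂ := (H₁.val \ H₂.val).card = 1 ∧ (H₂.val \ H₁.val).card = 1
  symm := ⟨fun _ _ h => ⟨h.2, h.1⟩⟩
  loopless := ⟨fun H h => by simp at h⟩

instance (n k M : ℕ) : DecidableRel (hypExchangeGraph n k M).Adj :=
  fun _ _ => show Decidable (_ ∧ _) from instDecidableAnd

/-- The lazy uniform walk on the hypergraph exchange graph, uniform on closed
neighborhoods with mass `1/(M(C(n,k)-M)+1)`. -/
noncomputable def hypExchangeWalk (n k M : ℕ) :
    HypergraphM n k M → HypergraphM n k M → ℝ :=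
  fun H H' =>
    if H = H' ∨ (hypExchangeGraph n k M).Adj H H' then
      1 / ((M * (n.choose k - M) : ℕ) + 1 : ℝ)
    else 0

section FinsetHelpers
variable {α : Type*} [DecidableEq α]

lemma eq_insert_erase_of_sdiff {A B : Finset α} {e f : α}
    (hA : A \ B = {e}) (hB : B \ A = {f}) : B = insert f (A.erase e) := by
  have h1 : ∀ x, x ∈ A ∧ x ∉ B ↔ x = e := fun x => by
    rw [← Finset.mem_singleton, ← hA]; simp
  have h2 : ∀ x, x ∈ B ∧ x ∉ A ↔ x = f := fun x => by
    rw [← Finset.mem_singleton, ← hB]; simp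
  ext x
  simp only [Finset.mem_insert, Finset.mem_erase]
  constructor
  · intro hx
    by_cases hxA : x ∈ A
    · exact Or.inr ⟨fun hxe => ((h1 x).2 hxe).2 hx, hxA⟩
    · exact Or.inl ((h2 x).1 ⟨hx, hxA⟩)
  · rintro (rfl | ⟨hxe, hxA⟩)
    · exact ((h2 x).2 rfl).1
    · by_contra hxB
      exact hxe ((h1 x).1 ⟨hxA, hxB⟩)

lemma sdiff_insert_erase {A : Finset α} {e f : α} (he : e ∈ A) (hf : f ∉ A) :
    A \ insert f (A.erase e) = {e} := by
  ext x
  simp only [Finset.mem_sdiff, Finset.mem_insert, Finset.mem_erase, Finset.mem_singleton]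
  constructor
  · rintro ⟨hxA, hx⟩
    by_contra hxe
    exact hx (Or.inr ⟨hxe, hxA⟩)
  · rintro rfl
    refine ⟨he, ?_⟩
    rintro (rfl | ⟨hne, _⟩)
    · exact hf he
    · exact hne rfl

lemma insert_erase_sdiff {A : Finset α} {e f : α} (he : e ∈ A) (hf : f ∉ A) :
    insert f (A.erase e) \ A = {f} := by
  ext x
  simp only [Finset.mem_sdiff, Finset.mem_insert, Finset.mem_erase, Finset.mem_singleton]
  constructor
  · rintro ⟨(rfl | ⟨_, hxA⟩), hxA'⟩
    · rfl
    · exact absurd hxA hxA'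
  · rintro rfl
    exact ⟨Or.inl rfl, hf⟩

lemma card_insert_erase {A : Finset α} {e f : α} (he : e ∈ A) (hf : f ∉ A) :
    (insert f (A.erase e)).card = A.card := by
  have hfe : f ∉ A.erase e := fun h => hf (Finset.mem_of_mem_erase h)
  rw [Finset.card_insert_of_notMem hfe, Finset.card_erase_of_mem he,
    Nat.sub_add_cancel (Finset.card_pos.mpr ⟨e, he⟩)]

lemma mem_image_swap {s : Finset α} {e f x : α} :
    x ∈ s.image (Equiv.swap e f) ↔ (Equiv.swap e f) x ∈ s := by
  rw [Finset.mem_image]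
  constructor
  · rintro ⟨z, hz, rfl⟩; rwa [Equiv.swap_apply_self]
  · intro h; exact ⟨_, h, Equiv.swap_apply_self _ _ _⟩

lemma image_swap_of_mem {s : Finset α} {e f : α} (he : e ∈ s) (hf : f ∉ s) :
    s.image (Equiv.swap e f) = insert f (s.erase e) := by
  have hef : e ≠ f := fun h => hf (h ▸ he)
  ext x
  rw [mem_image_swap, Finset.mem_insert, Finset.mem_erase]
  rcases eq_or_ne x e with rfl | hxe
  · rw [Equiv.swap_apply_left]
    simp [hf, hef]
  · rcases eq_or_ne x f with rfl | hxf
    · rw [Equiv.swap_apply_right]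
      simp [he]
    · rw [Equiv.swap_apply_of_ne_of_ne hxe hxf]
      simp [hxe, hxf]

lemma image_swap_of_iff {s : Finset α} {e f : α} (h : e ∈ s ↔ f ∈ s) :
    s.image (Equiv.swap e f) = s := by
  ext x
  rw [mem_image_swap]
  rcases eq_or_ne x e with rfl | hxe
  · rw [Equiv.swap_apply_left]; exact ⟨fun hf => h.mpr hf, fun hx => h.mp hx⟩
  · rcases eq_or_ne x f with rfl | hxf
    · rw [Equiv.swap_apply_right]; exact h
    · rw [Equiv.swap_apply_of_ne_of_ne hxe hxf]

end FinsetHelpers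

section Hyp
variable {n k M : ℕ}

local notation "V" => HypergraphM n k M
local notation "G" => hypExchangeGraph n k M

lemma hyp_adj_elim {H H' : V} (h : (hypExchangeGraph n k M).Adj H H') :
    ∃ a b, a ∈ H.val ∧ b ∉ H.val ∧ b.card = k ∧ H'.val = insert b (H.val.erase a) := by
  obtain ⟨a, ha⟩ := Finset.card_eq_one.mp h.1
  obtain ⟨b, hb⟩ := Finset.card_eq_one.mp h.2
  have haH : a ∈ H.val \ H'.val := ha ▸ Finset.mem_singleton_self a
  have hbH : b ∈ H'.val \ H.val := hb ▸ Finset.mem_singleton_self b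
  rw [Finset.mem_sdiff] at haH hbH
  exact ⟨a, b, haH.1, hbH.2, H'.prop.1 b hbH.1, eq_insert_erase_of_sdiff ha hb⟩

lemma hyp_adj_intro {H H' : V} {a b : Finset (Fin n)} (ha : a ∈ H.val) (hb : b ∉ H.val)
    (hH' : H'.val = insert b (H.val.erase a)) : (hypExchangeGraph n k M).Adj H H' := by
  constructor
  · rw [hH']; rw [sdiff_insert_erase ha hb]; exact Finset.card_singleton a
  · rw [hH']; rw [insert_erase_sdiff ha hb]; exact Finset.card_singleton b

lemma hyp_subset_powersetCard (H : V) :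
    H.val ⊆ Finset.powersetCard k (Finset.univ : Finset (Fin n)) := by
  intro s hs
  rw [Finset.mem_powersetCard]
  exact ⟨Finset.subset_univ s, H.prop.1 s hs⟩

lemma card_powersetCard_univ :
    (Finset.powersetCard k (Finset.univ : Finset (Fin n))).card = n.choose k := by
  rw [Finset.card_powersetCard, Finset.card_univ, Fintype.card_fin]

lemma hyp_degree (H : V) :
    (Finset.univ.filter (fun H' => (hypExchangeGraph n k M).Adj H H')).card =
      M * (n.choose k - M) := by
  have hcard : (H.val ×ˢ (Finset.powersetCard k (Finset.univ : Finset (Fin n)) \ H.val)).card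
      = M * (n.choose k - M) := by
    rw [Finset.card_product, H.prop.2, Finset.card_sdiff_of_subset (hyp_subset_powersetCard H),
      card_powersetCard_univ, H.prop.2]
  rw [← hcard]
  refine (Finset.card_bij (fun p hp => ?_) ?_ ?_ ?_).symm
  · -- the neighbor associated to a pair (a, b)
    rw [Finset.mem_product, Finset.mem_sdiff, Finset.mem_powersetCard] at hp
    exact ⟨insert p.2 (H.val.erase p.1), by
      intro h hh
      rcases Finset.mem_insert.mp hh with rfl | hh'
      · exact hp.2.1.2
      · exact H.prop.1 h (Finset.mem_of_mem_erase hh'), by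
      rw [card_insert_erase hp.1 hp.2.2]; exact H.prop.2⟩
  · intro p hp
    rw [Finset.mem_product, Finset.mem_sdiff, Finset.mem_powersetCard] at hp
    refine Finset.mem_filter.mpr ?_
    exact ⟨Finset.mem_univ _, hyp_adj_intro hp.1 hp.2.2 rfl⟩
  · intro p₁ hp₁ p₂ hp₂ heq
    rw [Finset.mem_product, Finset.mem_sdiff, Finset.mem_powersetCard] at hp₁ hp₂
    have hval : insert p₁.2 (H.val.erase p₁.1) = insert p₂.2 (H.val.erase p₂.1) :=
      congrArg Subtype.val heq
    have hb : p₁.2 = p₂.2 := by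
      have h1 : p₁.2 ∈ insert p₂.2 (H.val.erase p₂.1) := hval ▸ Finset.mem_insert_self _ _
      rcases Finset.mem_insert.mp h1 with h | h
      · exact h
      · exact absurd (Finset.mem_of_mem_erase h) hp₁.2.2
    have ha : p₁.1 = p₂.1 := by
      have h2 : p₂.1 ∉ insert p₂.2 (H.val.erase p₂.1) := by
        rw [Finset.mem_insert]
        rintro (h | h)
        · exact hp₂.2.2 (h ▸ hp₂.1)
        · exact (Finset.notMem_erase _ _) h
      rw [← hval, Finset.mem_insert] at h2
      push_neg at h2
      by_contra hne
      exact (h2.2 (Finset.mem_erase.mpr ⟨fun hc => hne hc.symm, hp₂.1⟩)).elim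
    exact Prod.ext ha hb
  · intro H' hH'
    rw [Finset.mem_filter] at hH'
    obtain ⟨a, b, ha, hb, hbk, hval⟩ := hyp_adj_elim hH'.2
    refine ⟨(a, b), ?_, ?_⟩
    · rw [Finset.mem_product, Finset.mem_sdiff, Finset.mem_powersetCard]
      exact ⟨ha, ⟨Finset.subset_univ b, hbk⟩, hb⟩
    · exact Subtype.ext hval.symm

end Hyp

section Coupling
variable {n k M : ℕ}

/-- Closed-neighborhood membership condition. -/
def NbC (n k M : ℕ) (H x : HypergraphM n k M) : Prop :=
  H = x ∨ (hypExchangeGraph n k M).Adj H x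

instance (n k M : ℕ) (H x : HypergraphM n k M) : Decidable (NbC n k M H x) := by
  unfold NbC; infer_instance

lemma adjacent_coupling {H₁ H₂ : HypergraphM n k M}
    (hadj : (hypExchangeGraph n k M).Adj H₁ H₂) :
    ∃ φ : Equiv.Perm (HypergraphM n k M),
      (∀ x, NbC n k M H₁ x ↔ NbC n k M H₂ (φ x)) ∧
      (∀ x, φ x = x ∨ (hypExchangeGraph n k M).Adj x (φ x)) ∧
      ((Finset.univ.filter (NbC n k M H₁)).filter (fun x => φ x ≠ x)).card ≤
        (M - 1) * (n.choose k - M - 1) := by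
  classical
  obtain ⟨e, he⟩ := Finset.card_eq_one.mp hadj.1
  obtain ⟨f, hf⟩ := Finset.card_eq_one.mp hadj.2
  have heH : e ∈ H₁.val \ H₂.val := he ▸ Finset.mem_singleton_self e
  have hfH : f ∈ H₂.val \ H₁.val := hf ▸ Finset.mem_singleton_self f
  rw [Finset.mem_sdiff] at heH hfH
  have heH₁ : e ∈ H₁.val := heH.1
  have hfH₁ : f ∉ H₁.val := hfH.2
  have hfH₂ : f ∈ H₂.val := hfH.1
  have hek : e.card = k := H₁.prop.1 e heH₁
  have hfk : f.card = k := H₂.prop.1 f hfH₂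
  have hval₂ : H₂.val = insert f (H₁.val.erase e) := eq_insert_erase_of_sdiff he hf
  set τ : Equiv.Perm (Finset (Fin n)) := Equiv.swap e f with hτ
  -- the involution on hypergraphs induced by swapping e and f
  have hcards : ∀ x : HypergraphM n k M,
      (∀ h ∈ x.val.image τ, h.card = k) ∧ (x.val.image τ).card = M := by
    intro x
    constructor
    · intro h hh
      obtain ⟨s, hs, rfl⟩ := Finset.mem_image.mp hh
      rcases eq_or_ne s e with rfl | hse
      · rw [hτ, Equiv.swap_apply_left]; exact hfk
      · rcases eq_or_ne s f with rfl | hsf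
        · rw [hτ, Equiv.swap_apply_right]; exact hek
        · rw [hτ, Equiv.swap_apply_of_ne_of_ne hse hsf]; exact x.prop.1 s hs
    · rw [Finset.card_image_of_injective _ τ.injective]; exact x.prop.2
  set σf : HypergraphM n k M → HypergraphM n k M :=
    fun x => ⟨x.val.image τ, hcards x⟩ with hσf
  have hσval : ∀ x : HypergraphM n k M, (σf x).val = x.val.image τ := fun _ => rfl
  have hinv : Function.Involutive σf := by
    intro x
    apply Subtype.ext
    rw [hσval, hσval, Finset.image_image]
    ext y
    simp only [Finset.mem_image, Function.comp_apply]
    constructor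
    · rintro ⟨z, hz, rfl⟩
      rw [hτ, Equiv.swap_apply_self]; exact hz
    · intro hy
      exact ⟨y, hy, by rw [hτ, Equiv.swap_apply_self]⟩
  have hσ₁₂ : σf H₁ = H₂ := by
    apply Subtype.ext
    rw [hσval, hτ, image_swap_of_mem heH₁ hfH₁, ← hval₂]
  have hσ₂₁ : σf H₂ = H₁ := by rw [← hσ₁₂, hinv H₁]
  have hadjmono : ∀ x y : HypergraphM n k M, (hypExchangeGraph n k M).Adj x y →
      (hypExchangeGraph n k M).Adj (σf x) (σf y) := by
    intro x y hxy
    constructor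
    · rw [hσval, hσval, ← Finset.image_sdiff _ _ τ.injective,
        Finset.card_image_of_injective _ τ.injective]
      exact hxy.1
    · rw [hσval, hσval, ← Finset.image_sdiff _ _ τ.injective,
        Finset.card_image_of_injective _ τ.injective]
      exact hxy.2
  have hadjiff : ∀ x y : HypergraphM n k M,
      (hypExchangeGraph n k M).Adj (σf x) (σf y) ↔ (hypExchangeGraph n k M).Adj x y := by
    intro x y
    refine ⟨fun h => ?_, hadjmono x y⟩
    have := hadjmono _ _ h
    rwa [hinv, hinv] at this
  have hmove : ∀ x : HypergraphM n k M, σf x = x ∨ (hypExchangeGraph n k M).Adj x (σf x) := by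
    intro x
    by_cases hiff : (e ∈ x.val ↔ f ∈ x.val)
    · left
      exact Subtype.ext (by rw [hσval, hτ, image_swap_of_iff hiff])
    · right
      by_cases hex : e ∈ x.val <;> by_cases hfx : f ∈ x.val
      · exact absurd (iff_of_true hex hfx) hiff
      · have hv : (σf x).val = insert f (x.val.erase e) := by
          rw [hσval, hτ, image_swap_of_mem hex hfx]
        exact hyp_adj_intro hex hfx hv
      · have hv : (σf x).val = insert e (x.val.erase f) := by
          rw [hσval, hτ, Equiv.swap_comm, image_swap_of_mem hfx hex]
        exact hyp_adj_intro hfx hex hv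
      · exact absurd (iff_of_false hex hfx) hiff
  set φ : Equiv.Perm (HypergraphM n k M) :=
    (hinv.toPerm σf).trans (Equiv.swap H₁ H₂) with hφdef
  have hφ : ∀ x, φ x = Equiv.swap H₁ H₂ (σf x) := fun _ => rfl
  have hφH₁ : φ H₁ = H₁ := by rw [hφ, hσ₁₂, Equiv.swap_apply_right]
  have hφH₂ : φ H₂ = H₂ := by rw [hφ, hσ₂₁, Equiv.swap_apply_left]
  have hφother : ∀ x, x ≠ H₁ → x ≠ H₂ → φ x = σf x := by
    intro x hx1 hx2
    rw [hφ, Equiv.swap_apply_of_ne_of_ne]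
    · intro hc; exact hx2 (by rw [← hinv x, hc, hσ₁₂])
    · intro hc; exact hx1 (by rw [← hinv x, hc, hσ₂₁])
  have hne₁₂ : H₁ ≠ H₂ := by
    intro hc
    rw [hc] at heH
    exact heH.2 heH.1
  refine ⟨φ, ?_, ?_, ?_⟩
  · -- neighborhood correspondence
    intro x
    have step1 : NbC n k M H₁ x ↔ NbC n k M H₂ (σf x) := by
      unfold NbC
      apply or_congr
      · constructor
        · rintro rfl; exact hσ₁₂.symm
        · intro h; rw [← hinv x, ← h, hσ₂₁]
      · rw [← hσ₁₂, hadjiff]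
    have step2 : ∀ y, NbC n k M H₂ y ↔ NbC n k M H₂ (Equiv.swap H₁ H₂ y) := by
      intro y
      rcases eq_or_ne y H₁ with rfl | hy1
      · rw [Equiv.swap_apply_left]
        unfold NbC
        constructor
        · intro _; exact Or.inl rfl
        · intro _; exact Or.inr hadj.symm
      · rcases eq_or_ne y H₂ with rfl | hy2
        · rw [Equiv.swap_apply_right]
          unfold NbC
          constructor
          · intro _; exact Or.inr hadj.symm
          · intro _; exact Or.inl rfl
        · rw [Equiv.swap_apply_of_ne_of_ne hy1 hy2]
    rw [step1, hφ, ← step2]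
  · -- each point moves by at most one step
    intro x
    rcases eq_or_ne x H₁ with rfl | hx1
    · left; exact hφH₁
    · rcases eq_or_ne x H₂ with rfl | hx2
      · left; exact hφH₂
      · rw [hφother x hx1 hx2]; exact hmove x
  · -- counting the moved elements
    have hmember : ∀ x, x ∈ (Finset.univ.filter (NbC n k M H₁)).filter (fun x => φ x ≠ x) →
        (hypExchangeGraph n k M).Adj H₁ x ∧ e ∈ x.val ∧ f ∉ x.val := by
      intro x hx
      rw [Finset.mem_filter, Finset.mem_filter] at hx
      obtain ⟨⟨-, hnb⟩, hmoved⟩ := hx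
      have hx1 : x ≠ H₁ := fun hc => hmoved (by rw [hc, hφH₁])
      have hx2 : x ≠ H₂ := fun hc => hmoved (by rw [hc, hφH₂])
      have hadj1 : (hypExchangeGraph n k M).Adj H₁ x :=
        hnb.resolve_left (fun hc => hx1 hc.symm)
      have hσmoved : σf x ≠ x := by rw [← hφother x hx1 hx2]; exact hmoved
      by_cases hex : e ∈ x.val <;> by_cases hfx : f ∈ x.val
      · exact absurd (Subtype.ext (by
          rw [hσval, hτ, image_swap_of_iff (iff_of_true hex hfx)])) hσmoved
      · exact ⟨hadj1, hex, hfx⟩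
      · exfalso
        obtain ⟨a, hA⟩ := Finset.card_eq_one.mp hadj1.1
        obtain ⟨b, hB⟩ := Finset.card_eq_one.mp hadj1.2
        have hea : e = a := Finset.mem_singleton.mp
          (hA ▸ Finset.mem_sdiff.mpr ⟨heH₁, hex⟩)
        have hfb : f = b := Finset.mem_singleton.mp
          (hB ▸ Finset.mem_sdiff.mpr ⟨hfx, hfH₁⟩)
        have hA' : H₁.val \ x.val = {e} := by rw [hA, hea]
        have hB' : x.val \ H₁.val = {f} := by rw [hB, hfb]
        exact hx2 (Subtype.ext ((eq_insert_erase_of_sdiff hA' hB').trans hval₂.symm))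
      · exact absurd (Subtype.ext (by
          rw [hσval, hτ, image_swap_of_iff (iff_of_false hex hfx)])) hσmoved
    set T : Finset (Finset (Finset (Fin n)) × Finset (Finset (Fin n))) :=
      ((H₁.val.erase e).image (fun a => ({a} : Finset (Finset (Fin n))))) ×ˢ
        (((Finset.powersetCard k (Finset.univ : Finset (Fin n)) \ H₁.val).erase f).image
          (fun a => ({a} : Finset (Finset (Fin n))))) with hTdef
    have h1 : ((Finset.univ.filter (NbC n k M H₁)).filter (fun x => φ x ≠ x)).card ≤ T.card := by
      apply Finset.card_le_card_of_injOn (fun x => (H₁.val \ x.val, x.val \ H₁.val))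
      · intro x hx
        obtain ⟨hadj1, hex, hfx⟩ := hmember x hx
        obtain ⟨a, hA⟩ := Finset.card_eq_one.mp hadj1.1
        obtain ⟨b, hB⟩ := Finset.card_eq_one.mp hadj1.2
        have haH : a ∈ H₁.val \ x.val := hA ▸ Finset.mem_singleton_self a
        have hbH : b ∈ x.val \ H₁.val := hB ▸ Finset.mem_singleton_self b
        rw [Finset.mem_sdiff] at haH hbH
        simp only [Finset.mem_coe, hTdef]
        rw [Finset.mem_product, hA, hB]
        constructor
        · exact Finset.mem_image_of_mem _ (Finset.mem_erase.mpr
            ⟨fun hc => haH.2 (hc ▸ hex), haH.1⟩)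
        · refine Finset.mem_image_of_mem _ (Finset.mem_erase.mpr
            ⟨fun hc => hfx (hc ▸ hbH.1), ?_⟩)
          rw [Finset.mem_sdiff, Finset.mem_powersetCard]
          exact ⟨⟨Finset.subset_univ b, x.prop.1 b hbH.1⟩, hbH.2⟩
      · intro x hx y hy hxy
        obtain ⟨hadjx, -, -⟩ := hmember x (Finset.mem_coe.mp hx)
        obtain ⟨hadjy, -, -⟩ := hmember y (Finset.mem_coe.mp hy)
        obtain ⟨a, hA⟩ := Finset.card_eq_one.mp hadjx.1
        obtain ⟨b, hB⟩ := Finset.card_eq_one.mp hadjx.2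
        have hxy1 : H₁.val \ x.val = H₁.val \ y.val := congrArg Prod.fst hxy
        have hxy2 : x.val \ H₁.val = y.val \ H₁.val := congrArg Prod.snd hxy
        have h1 : H₁.val \ y.val = {a} := by rw [← hxy1, hA]
        have h2 : y.val \ H₁.val = {b} := by rw [← hxy2, hB]
        exact Subtype.ext ((eq_insert_erase_of_sdiff hA hB).trans
          (eq_insert_erase_of_sdiff h1 h2).symm)
    have h2 : T.card = (M - 1) * (n.choose k - M - 1) := by
      rw [hTdef, Finset.card_product,
        Finset.card_image_of_injective _ Finset.singleton_injective,
        Finset.card_image_of_injective _ Finset.singleton_injective,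
        Finset.card_erase_of_mem heH₁, H₁.prop.2,
        Finset.card_erase_of_mem (Finset.mem_sdiff.mpr
          ⟨Finset.mem_powersetCard.mpr ⟨Finset.subset_univ f, hfk⟩, hfH₁⟩),
        Finset.card_sdiff_of_subset (hyp_subset_powersetCard H₁), card_powersetCard_univ, H₁.prop.2]
    exact h1.trans (le_of_eq h2)

lemma walk_coupling {H₁ H₂ : HypergraphM n k M}
    (p : (hypExchangeGraph n k M).Walk H₁ H₂) :
    ∃ φ : Equiv.Perm (HypergraphM n k M),
      (∀ x, NbC n k M H₁ x ↔ NbC n k M H₂ (φ x)) ∧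
      (∀ x, (hypExchangeGraph n k M).Reachable x (φ x)) ∧
      ∑ x ∈ Finset.univ.filter (NbC n k M H₁), (hypExchangeGraph n k M).dist x (φ x) ≤
        p.length * ((M - 1) * (n.choose k - M - 1)) := by
  classical
  induction p with
  | nil =>
    refine ⟨Equiv.refl _, fun x => Iff.rfl, fun x => SimpleGraph.Reachable.refl x, ?_⟩
    simp [SimpleGraph.dist_self]
  | @cons a b c hab p ih =>
    obtain ⟨φ₂, hiff₂, hreach₂, hsum₂⟩ := ih
    obtain ⟨φ₁, hiff₁, hmove₁, hcount₁⟩ := adjacent_coupling hab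
    have hreach₁ : ∀ x, (hypExchangeGraph n k M).Reachable x (φ₁ x) := by
      intro x
      rcases hmove₁ x with h | h
      · rw [h]
      · exact h.reachable
    refine ⟨φ₁.trans φ₂, ?_, ?_, ?_⟩
    · intro x; rw [hiff₁, hiff₂]; rfl
    · intro x; exact (hreach₁ x).trans (hreach₂ (φ₁ x))
    · have htri : ∀ x, (hypExchangeGraph n k M).dist x (φ₂ (φ₁ x)) ≤
          (hypExchangeGraph n k M).dist x (φ₁ x) +
          (hypExchangeGraph n k M).dist (φ₁ x) (φ₂ (φ₁ x)) := by
        intro x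
        obtain ⟨q₁, hq₁⟩ := (hreach₁ x).exists_walk_length_eq_dist
        obtain ⟨q₂, hq₂⟩ := (hreach₂ (φ₁ x)).exists_walk_length_eq_dist
        calc (hypExchangeGraph n k M).dist x (φ₂ (φ₁ x)) ≤ (q₁.append q₂).length :=
              SimpleGraph.dist_le _
          _ = _ := by rw [SimpleGraph.Walk.length_append, hq₁, hq₂]
      calc ∑ x ∈ Finset.univ.filter (NbC n k M a),
            (hypExchangeGraph n k M).dist x ((φ₁.trans φ₂) x)
          ≤ ∑ x ∈ Finset.univ.filter (NbC n k M a),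
            ((hypExchangeGraph n k M).dist x (φ₁ x) +
              (hypExchangeGraph n k M).dist (φ₁ x) (φ₂ (φ₁ x))) :=
            Finset.sum_le_sum (fun x _ => htri x)
        _ = (∑ x ∈ Finset.univ.filter (NbC n k M a), (hypExchangeGraph n k M).dist x (φ₁ x)) +
            ∑ x ∈ Finset.univ.filter (NbC n k M a),
              (hypExchangeGraph n k M).dist (φ₁ x) (φ₂ (φ₁ x)) := Finset.sum_add_distrib
        _ ≤ (M - 1) * (n.choose k - M - 1) +
            p.length * ((M - 1) * (n.choose k - M - 1)) := by
            apply Nat.add_le_add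
            · -- first sum: bounded by number of moved points
              calc ∑ x ∈ Finset.univ.filter (NbC n k M a),
                    (hypExchangeGraph n k M).dist x (φ₁ x)
                  ≤ ∑ x ∈ Finset.univ.filter (NbC n k M a), (if φ₁ x = x then 0 else 1) := by
                    apply Finset.sum_le_sum
                    intro x _
                    rcases eq_or_ne (φ₁ x) x with h | h
                    · rw [if_pos h, h, SimpleGraph.dist_self]
                    · rw [if_neg h]
                      have hadjx : (hypExchangeGraph n k M).Adj x (φ₁ x) :=
                        (hmove₁ x).resolve_left h
                      calc (hypExchangeGraph n k M).dist x (φ₁ x) ≤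
                            (SimpleGraph.Walk.cons hadjx SimpleGraph.Walk.nil).length :=
                            SimpleGraph.dist_le _
                        _ = 1 := by simp
                _ = ((Finset.univ.filter (NbC n k M a)).filter (fun x => ¬ φ₁ x = x)).card := by
                    rw [Finset.sum_ite, Finset.sum_const_zero, Finset.sum_const, zero_add,
                      smul_eq_mul, mul_one]
                _ ≤ (M - 1) * (n.choose k - M - 1) := hcount₁
            · -- second sum: reindex by φ₁
              calc ∑ x ∈ Finset.univ.filter (NbC n k M a),
                    (hypExchangeGraph n k M).dist (φ₁ x) (φ₂ (φ₁ x))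
                  = ∑ y ∈ Finset.univ.filter (NbC n k M b),
                    (hypExchangeGraph n k M).dist y (φ₂ y) := by
                    apply Finset.sum_bij (fun x _ => φ₁ x)
                    · intro x hx
                      rw [Finset.mem_filter] at hx ⊢
                      exact ⟨Finset.mem_univ _, (hiff₁ x).mp hx.2⟩
                    · intro x _ y _ h
                      exact φ₁.injective h
                    · intro y hy
                      refine ⟨φ₁.symm y, ?_, by simp⟩
                      rw [Finset.mem_filter] at hy ⊢
                      refine ⟨Finset.mem_univ _, ?_⟩
                      rw [hiff₁ (φ₁.symm y)]
                      simpa using hy.2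
                    · intro x _; rfl
                _ ≤ p.length * ((M - 1) * (n.choose k - M - 1)) := hsum₂
        _ = (SimpleGraph.Walk.cons hab p).length * ((M - 1) * (n.choose k - M - 1)) := by
            rw [SimpleGraph.Walk.length_cons]
            ring

lemma hyp_arith (hM0 : 0 < M) (hMC : M < n.choose k) :
    (M - 1) * (n.choose k - M - 1) + n.choose k = M * (n.choose k - M) + 1 := by
  obtain ⟨m, rfl⟩ : ∃ m, M = m + 1 := ⟨M - 1, by omega⟩
  obtain ⟨s, hs⟩ : ∃ s, n.choose k = (m + 1) + s + 1 := ⟨n.choose k - (m + 1) - 1, by omega⟩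
  rw [hs]
  have h1 : (m + 1) + s + 1 - (m + 1) = s + 1 := by omega
  have h2 : (m + 1) - 1 = m := by omega
  rw [h1, h2]
  have h3 : s + 1 - 1 = s := by omega
  rw [h3]
  ring

lemma nb_card (H : HypergraphM n k M) :
    (Finset.univ.filter (NbC n k M H)).card = M * (n.choose k - M) + 1 := by
  classical
  have hfe : Finset.univ.filter (NbC n k M H) =
      {H} ∪ Finset.univ.filter (fun x => (hypExchangeGraph n k M).Adj H x) := by
    ext x
    simp only [Finset.mem_filter, Finset.mem_union, Finset.mem_singleton, Finset.mem_univ,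
      true_and, NbC]
    constructor
    · rintro (rfl | h)
      · exact Or.inl rfl
      · exact Or.inr h
    · rintro (rfl | h)
      · exact Or.inl rfl
      · exact Or.inr h
  rw [hfe, Finset.card_union_of_disjoint, Finset.card_singleton, hyp_degree H, add_comm]
  rw [Finset.disjoint_singleton_left, Finset.mem_filter]
  rintro ⟨-, h⟩
  exact (hypExchangeGraph n k M).irrefl h

end Coupling

theorem hypExchange_regular_invariant_ricci_aux (n k M : ℕ)
    (hM0 : 0 < M) (hMC : M < n.choose k) :
    (∀ H : HypergraphM n k M,
      (Finset.univ.filter (fun H' => (hypExchangeGraph n k M).Adj H H')).card =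
        M * (n.choose k - M)) ∧
    (∀ H : HypergraphM n k M,
      ∑ H' : HypergraphM n k M,
          (((n.choose k).choose M : ℝ))⁻¹ * hypExchangeWalk n k M H' H =
        (((n.choose k).choose M : ℝ))⁻¹) ∧
    (∀ H₁ H₂ : HypergraphM n k M,
      (n.choose k : ℝ) / ((M * (n.choose k - M) : ℕ) + 1 : ℝ) ≤
        ricci (hypExchangeGraph n k M) (hypExchangeWalk n k M) H₁ H₂) := by
  classical
  have hDpos : (0 : ℝ) < ((M * (n.choose k - M) : ℕ) : ℝ) + 1 := by positivity
  have harith := hyp_arith (n := n) (k := k) (M := M) hM0 hMC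
  have hmval : ∀ H x : HypergraphM n k M, hypExchangeWalk n k M H x =
      if NbC n k M H x then 1 / (((M * (n.choose k - M) : ℕ) : ℝ) + 1) else 0 :=
    fun H x => rfl
  have hsum_walk : ∀ H : HypergraphM n k M, ∑ H', hypExchangeWalk n k M H H' = 1 := by
    intro H
    calc ∑ H', hypExchangeWalk n k M H H'
        = ∑ H' ∈ Finset.univ.filter (NbC n k M H),
            (1 / (((M * (n.choose k - M) : ℕ) : ℝ) + 1)) := by
          rw [Finset.sum_filter]
          exact Finset.sum_congr rfl (fun x _ => hmval H x)
      _ = ((M * (n.choose k - M) + 1 : ℕ) : ℝ) * (1 / (((M * (n.choose k - M) : ℕ) : ℝ) + 1)) := by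
          rw [Finset.sum_const, nb_card H, nsmul_eq_mul]
      _ = 1 := by
          push_cast
          field_simp
  refine ⟨hyp_degree, ?_, ?_⟩
  · -- invariance
    intro H
    have hsym : ∀ H', hypExchangeWalk n k M H' H = hypExchangeWalk n k M H H' := by
      intro H'
      unfold hypExchangeWalk
      refine if_congr (or_congr eq_comm ⟨fun h => h.symm, fun h => h.symm⟩) rfl rfl
    calc ∑ H', (((n.choose k).choose M : ℝ))⁻¹ * hypExchangeWalk n k M H' H
        = (((n.choose k).choose M : ℝ))⁻¹ * ∑ H', hypExchangeWalk n k M H H' := by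
          rw [Finset.mul_sum]
          exact Finset.sum_congr rfl (fun H' _ => by rw [hsym H'])
      _ = (((n.choose k).choose M : ℝ))⁻¹ := by rw [hsum_walk H, mul_one]
  · -- Ricci curvature
    intro H₁ H₂
    have hCle : (n.choose k : ℝ) ≤ ((M * (n.choose k - M) : ℕ) : ℝ) + 1 := by
      have : n.choose k ≤ M * (n.choose k - M) + 1 := by omega
      exact_mod_cast this
    by_cases hd : (hypExchangeGraph n k M).dist H₁ H₂ = 0
    · unfold ricci
      rw [hd, Nat.cast_zero, div_zero, sub_zero]
      exact (div_le_one hDpos).mpr hCle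
    · obtain ⟨p, hp⟩ := SimpleGraph.exists_walk_of_dist_ne_zero hd
      obtain ⟨φ, hiff, hreach, hsum⟩ := walk_coupling p
      set m := hypExchangeWalk n k M with hm
      set A : HypergraphM n k M → HypergraphM n k M → ℝ :=
        fun x y => if y = φ x then m H₁ x else 0 with hA
      have hm_nonneg : ∀ x y, 0 ≤ m x y := by
        intro x y
        rw [hmval]
        split
        · positivity
        · exact le_refl 0
      have hcoup : IsCoupling (m H₁) (m H₂) A := by
        refine ⟨?_, ?_, ?_⟩
        · intro x y
          rw [hA]
          dsimp only
          split
          · exact hm_nonneg H₁ x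
          · exact le_refl 0
        · intro x
          rw [hA]
          dsimp only
          rw [Finset.sum_ite_eq' Finset.univ (φ x) (fun _ => m H₁ x), if_pos (Finset.mem_univ _)]
        · intro y
          rw [hA]
          dsimp only
          calc ∑ x, (if y = φ x then m H₁ x else 0)
              = ∑ x, (if x = φ.symm y then m H₁ x else 0) := by
                refine Finset.sum_congr rfl (fun x _ => ?_)
                refine if_congr ?_ rfl rfl
                constructor
                · rintro rfl; simp
                · rintro rfl; simp
            _ = m H₁ (φ.symm y) := by
                rw [Finset.sum_ite_eq' Finset.univ (φ.symm y) (fun z => m H₁ z),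
                  if_pos (Finset.mem_univ _)]
            _ = m H₂ y := by
                rw [hmval, hmval]
                have h := hiff (φ.symm y)
                rw [Equiv.apply_symm_apply] at h
                exact if_congr h rfl rfl
      have hbdd : BddBelow {s | ∃ A' : HypergraphM n k M → HypergraphM n k M → ℝ,
          IsCoupling (m H₁) (m H₂) A' ∧
          s = ∑ x, ∑ y, A' x y * ((hypExchangeGraph n k M).dist x y : ℝ)} := by
        refine ⟨0, ?_⟩
        rintro s ⟨A', hA', rfl⟩
        apply Finset.sum_nonneg
        intro x _
        apply Finset.sum_nonneg
        intro y _
        exact mul_nonneg (hA'.1 x y) (Nat.cast_nonneg _)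
      have hW : Wdist (hypExchangeGraph n k M) (m H₁) (m H₂) ≤
          ∑ x, ∑ y, A x y * ((hypExchangeGraph n k M).dist x y : ℝ) :=
        csInf_le hbdd ⟨A, hcoup, rfl⟩
      have hcost : ∑ x, ∑ y, A x y * ((hypExchangeGraph n k M).dist x y : ℝ) ≤
          (1 / (((M * (n.choose k - M) : ℕ) : ℝ) + 1)) *
            (((hypExchangeGraph n k M).dist H₁ H₂ : ℝ) *
              ((M - 1) * (n.choose k - M - 1) : ℕ)) := by
        have hinner : ∀ x, ∑ y, A x y * ((hypExchangeGraph n k M).dist x y : ℝ) =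
            m H₁ x * ((hypExchangeGraph n k M).dist x (φ x) : ℝ) := by
          intro x
          rw [hA]
          dsimp only
          calc ∑ y, (if y = φ x then m H₁ x else 0) * ((hypExchangeGraph n k M).dist x y : ℝ)
              = ∑ y, (if y = φ x then m H₁ x * ((hypExchangeGraph n k M).dist x y : ℝ) else 0) := by
                refine Finset.sum_congr rfl (fun y _ => ?_)
                rw [ite_mul, zero_mul]
            _ = m H₁ x * ((hypExchangeGraph n k M).dist x (φ x) : ℝ) := by
                rw [Finset.sum_ite_eq' Finset.univ (φ x)
                  (fun y => m H₁ x * ((hypExchangeGraph n k M).dist x y : ℝ)),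
                  if_pos (Finset.mem_univ _)]
        calc ∑ x, ∑ y, A x y * ((hypExchangeGraph n k M).dist x y : ℝ)
            = ∑ x, m H₁ x * ((hypExchangeGraph n k M).dist x (φ x) : ℝ) :=
              Finset.sum_congr rfl (fun x _ => hinner x)
          _ = ∑ x ∈ Finset.univ.filter (NbC n k M H₁),
              (1 / (((M * (n.choose k - M) : ℕ) : ℝ) + 1)) *
                ((hypExchangeGraph n k M).dist x (φ x) : ℝ) := by
              rw [Finset.sum_filter]
              refine Finset.sum_congr rfl (fun x _ => ?_)
              rw [hmval, ite_mul, zero_mul]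
          _ = (1 / (((M * (n.choose k - M) : ℕ) : ℝ) + 1)) *
              ∑ x ∈ Finset.univ.filter (NbC n k M H₁),
                ((hypExchangeGraph n k M).dist x (φ x) : ℝ) := by
              rw [Finset.mul_sum]
          _ ≤ (1 / (((M * (n.choose k - M) : ℕ) : ℝ) + 1)) *
              (((hypExchangeGraph n k M).dist H₁ H₂ : ℝ) *
                ((M - 1) * (n.choose k - M - 1) : ℕ)) := by
              apply mul_le_mul_of_nonneg_left _ (by positivity)
              rw [← Nat.cast_sum]
              rw [← hp]
              have := hsum
              push_cast
              exact_mod_cast hsum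
      have hdpos : (0 : ℝ) < ((hypExchangeGraph n k M).dist H₁ H₂ : ℝ) := by
        exact_mod_cast Nat.pos_of_ne_zero hd
      unfold ricci
      have hWd : Wdist (hypExchangeGraph n k M) (m H₁) (m H₂) /
            ((hypExchangeGraph n k M).dist H₁ H₂ : ℝ) ≤
          (((M - 1) * (n.choose k - M - 1) : ℕ) : ℝ) /
            (((M * (n.choose k - M) : ℕ) : ℝ) + 1) := by
        rw [div_le_iff₀ hdpos]
        calc Wdist (hypExchangeGraph n k M) (m H₁) (m H₂) ≤ _ := hW.trans hcost
          _ = (((M - 1) * (n.choose k - M - 1) : ℕ) : ℝ) /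
              (((M * (n.choose k - M) : ℕ) : ℝ) + 1) *
              ((hypExchangeGraph n k M).dist H₁ H₂ : ℝ) := by
            field_simp
      have hfinal : (n.choose k : ℝ) / (((M * (n.choose k - M) : ℕ) : ℝ) + 1) =
          1 - (((M - 1) * (n.choose k - M - 1) : ℕ) : ℝ) /
            (((M * (n.choose k - M) : ℕ) : ℝ) + 1) := by
        have hc : (((M - 1) * (n.choose k - M - 1) : ℕ) : ℝ) + (n.choose k : ℝ) =
            ((M * (n.choose k - M) : ℕ) : ℝ) + 1 := by exact_mod_cast harith
        rw [eq_sub_iff_add_eq, ← add_div, div_eq_one_iff_eq (ne_of_gt hDpos)]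
        linarith
      rw [hfinal]
      linarith [hWd]

/-- For `0 < M < C(n,k)`, the hypergraph exchange graph is
`M(C(n,k)-M)`-regular, the uniform distribution is invariant for the lazy uniform
walk, and the Ricci curvature satisfies `κ(ℋ₁,ℋ₂) ≥ C(n,k)/(M(C(n,k)-M)+1)` for all
pairs of hypergraphs. -/
theorem hypExchange_regular_invariant_ricci (n k M : ℕ)
    (hM0 : 0 < M) (hMC : M < n.choose k) :
    (∀ H : HypergraphM n k M,
      (Finset.univ.filter (fun H' => (hypExchangeGraph n k M).Adj H H')).card =
        M * (n.choose k - M)) ∧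
    (∀ H : HypergraphM n k M,
      ∑ H' : HypergraphM n k M,
          (((n.choose k).choose M : ℝ))⁻¹ * hypExchangeWalk n k M H' H =
        (((n.choose k).choose M : ℝ))⁻¹) ∧
    (∀ H₁ H₂ : HypergraphM n k M,
      (n.choose k : ℝ) / ((M * (n.choose k - M) : ℕ) + 1 : ℝ) ≤
        ricci (hypExchangeGraph n k M) (hypExchangeWalk n k M) H₁ H₂) :=
  hypExchange_regular_invariant_ricci_aux n k M hM0 hMC
end
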